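/- Let g : [0,∞) → [0,∞) be nonincreasing and bounded, and let c > 0, 0 < β < 1, and s ≥ 0. If the series Σ_{m=1}^∞ g(m) · m^{(s+1)/β − 1} converges, then the series Σ_{m=1}^∞ g(c·m^β) · m^s also converges. -/

import Mathlib

open Finset

private lemma chord_rpow {q t : ℝ} (hq : 1 ≤ q) (ht0 : 0 ≤ t) (ht1 : t ≤ 1) :
    (1 + t) ^ q ≤ 1 + (2 ^ q - 1) * t := by
  have hconv := convexOn_rpow hq
  have h := hconv.2 (Set.mem_Ici.2 (by norm_num : (0:ℝ) ≤ 1))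
      (Set.mem_Ici.2 (by norm_num : (0:ℝ) ≤ 2))
      (by linarith : (0:ℝ) ≤ 1 - t) ht0 (by ring)
  simp only [smul_eq_mul] at h
  have h1 : ((1 - t) * 1 + t * 2 : ℝ) = 1 + t := by ring
  rw [h1] at h
  calc (1 + t) ^ q ≤ (1 - t) * 1 ^ q + t * 2 ^ q := h
    _ = 1 + (2 ^ q - 1) * t := by rw [Real.one_rpow]; ring

private lemma rpow_succ_sub_le {q : ℝ} (hq : 1 ≤ q) (n : ℕ) (hn : 1 ≤ n) :
    ((n : ℝ) + 1) ^ q ≤ (n : ℝ) ^ q + (2 ^ q - 1) * (n : ℝ) ^ (q - 1) := by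
  have hn1 : (1 : ℝ) ≤ (n : ℝ) := by exact_mod_cast hn
  have hn0 : (0 : ℝ) < (n : ℝ) := by linarith
  have hsplit : ((n : ℝ) + 1) = (n : ℝ) * (1 + 1 / n) := by field_simp
  have ht0 : (0 : ℝ) ≤ 1 / n := by positivity
  have ht1 : (1 / (n : ℝ)) ≤ 1 := by rw [div_le_one hn0]; exact hn1
  calc ((n : ℝ) + 1) ^ q = (n : ℝ) ^ q * (1 + 1 / n) ^ q := by
        rw [hsplit, Real.mul_rpow hn0.le (by linarith)]
    _ ≤ (n : ℝ) ^ q * (1 + (2 ^ q - 1) * (1 / n)) := by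
        apply mul_le_mul_of_nonneg_left (chord_rpow hq ht0 ht1) (Real.rpow_nonneg hn0.le q)
    _ = (n : ℝ) ^ q + (2 ^ q - 1) * ((n : ℝ) ^ q / n) := by ring
    _ = (n : ℝ) ^ q + (2 ^ q - 1) * (n : ℝ) ^ (q - 1) := by
        rw [Real.rpow_sub hn0, Real.rpow_one]

/-- **Theorem (summability along a snowflaked scale).**
Let `g : [0,∞) → [0,∞)` be nonincreasing and bounded, `c > 0`, `0 < β < 1`, `s ≥ 0`.
If `Σ_{m≥1} g(m) m^{(s+1)/β − 1}` converges, then `Σ_{m≥1} g(c m^β) m^s` converges. -/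
theorem summable_snowflake_change_of_variables
    (g : ℝ → ℝ) (hg0 : ∀ x : ℝ, 0 ≤ x → 0 ≤ g x)
    (hmono : ∀ x y : ℝ, 0 ≤ x → x ≤ y → g y ≤ g x)
    (hbdd : ∃ K : ℝ, ∀ x : ℝ, 0 ≤ x → g x ≤ K)
    (c β s : ℝ) (hc : 0 < c) (hβ0 : 0 < β) (hβ1 : β < 1) (hs : 0 ≤ s)
    (hsum : Summable (fun m : ℕ => g ((m : ℝ) + 1) * ((m : ℝ) + 1) ^ ((s + 1) / β - 1))) :
    Summable (fun m : ℕ => g (c * ((m : ℝ) + 1) ^ β) * ((m : ℝ) + 1) ^ s) := by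
  classical
  obtain ⟨K, hK⟩ := hbdd
  have hK0 : 0 ≤ K := le_trans (hg0 0 le_rfl) (hK 0 le_rfl)
  set q : ℝ := 1 / β with hqdef
  have hq0 : 0 < q := by positivity
  have hq1 : 1 ≤ q := by rw [hqdef, le_div_iff₀ hβ0]; linarith
  have hβq : β * q = 1 := by rw [hqdef]; field_simp
  set p : ℝ := (s + 1) / β - 1 with hpdef
  have hpq : p = q * (s + 1) - 1 := by rw [hpdef, hqdef]; ring
  set b : ℕ → ℝ := fun i => g ((i : ℝ) + 1) * ((i : ℝ) + 1) ^ p with hbdef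
  have hbnn : ∀ i, 0 ≤ b i := fun i =>
    mul_nonneg (hg0 _ (by positivity)) (Real.rpow_nonneg (by positivity) _)
  set a : ℕ → ℝ := fun m => g (c * ((m : ℝ) + 1) ^ β) * ((m : ℝ) + 1) ^ s with hadef
  have hann : ∀ m, 0 ≤ a m := fun m =>
    mul_nonneg (hg0 _ (by positivity)) (Real.rpow_nonneg (by positivity) _)
  -- floor map
  set φ : ℕ → ℕ := fun m => ⌊c * ((m : ℝ) + 1) ^ β⌋₊ with hφdef
  -- constants
  set D : ℝ := (2 ^ q - 1) / c ^ q + 2 with hDdef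
  have hD0 : 0 ≤ D := by
    have : (1:ℝ) ≤ 2 ^ q := Real.one_le_rpow (by norm_num) hq0.le
    have : (0:ℝ) ≤ (2 ^ q - 1) / c ^ q := div_nonneg (by linarith) (Real.rpow_nonneg hc.le q)
    rw [hDdef]; linarith
  set E : ℝ := 2 ^ (q * s) / c ^ (q * s) with hEdef
  have hE0 : 0 ≤ E := div_nonneg (Real.rpow_nonneg (by norm_num) _) (Real.rpow_nonneg hc.le _)
  set A0 : ℝ := (⌈(1 / c) ^ q⌉₊ : ℝ) * (K * ((1 / c) ^ q) ^ s) with hA0def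
  set B : ℝ := ∑' i, b i with hBdef
  apply summable_of_sum_range_le hann
  intro M
  -- choose N
  set N : ℕ := ⌊c * ((M : ℝ) + 1) ^ β⌋₊ + 1 with hNdef
  have hmaps : ∀ m ∈ Finset.range M, φ m ∈ Finset.range (N + 1) := by
    intro m hm
    rw [Finset.mem_range] at hm ⊢
    have h1 : ((m : ℝ) + 1) ≤ ((M : ℝ) + 1) := by
      have : (m : ℝ) ≤ M := by exact_mod_cast hm.le
      linarith
    have h2 : c * ((m : ℝ) + 1) ^ β ≤ c * ((M : ℝ) + 1) ^ β := by
      apply mul_le_mul_of_nonneg_left (Real.rpow_le_rpow (by positivity) h1 hβ0.le) hc.le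
    calc φ m ≤ ⌊c * ((M : ℝ) + 1) ^ β⌋₊ := Nat.floor_le_floor h2
      _ < N + 1 := by omega
  rw [← Finset.sum_fiberwise_of_maps_to hmaps a]
  -- fiber sums
  have hid : ∀ m : ℕ, (((m : ℝ) + 1) ^ β) ^ q = (m : ℝ) + 1 := by
    intro m
    rw [← Real.rpow_mul (by positivity), hβq, Real.rpow_one]
  have fiber0 : ∑ m ∈ (Finset.range M).filter (fun m => φ m = 0), a m ≤ A0 := by
    have hkey : ∀ m : ℕ, φ m = 0 → ((m : ℝ) + 1) < (1 / c) ^ q := by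
      intro m hm
      rw [hφdef] at hm
      simp only at hm
      have hlt : c * ((m : ℝ) + 1) ^ β < 1 := Nat.floor_eq_zero.1 hm
      have h1 : ((m : ℝ) + 1) ^ β < 1 / c := by
        rw [lt_div_iff₀ hc, mul_comm]; exact hlt
      have h2 := Real.rpow_lt_rpow (by positivity) h1 hq0
      rwa [hid m] at h2
    have hsub : (Finset.range M).filter (fun m => φ m = 0) ⊆ Finset.range ⌈(1 / c) ^ q⌉₊ := by
      intro m hm
      rw [Finset.mem_filter] at hm
      rw [Finset.mem_range]
      exact Nat.lt_ceil.2 (by linarith [hkey m hm.2])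
    have hterm : ∀ m ∈ (Finset.range M).filter (fun m => φ m = 0),
        a m ≤ K * ((1 / c) ^ q) ^ s := by
      intro m hm
      rw [Finset.mem_filter] at hm
      have h2 := hkey m hm.2
      exact mul_le_mul (hK _ (by positivity))
        (Real.rpow_le_rpow (by positivity) h2.le hs)
        (Real.rpow_nonneg (by positivity) s) hK0
    calc ∑ m ∈ (Finset.range M).filter (fun m => φ m = 0), a m
        ≤ ((Finset.range M).filter (fun m => φ m = 0)).card • (K * ((1 / c) ^ q) ^ s) :=
          Finset.sum_le_card_nsmul _ _ _ hterm
      _ = (((Finset.range M).filter (fun m => φ m = 0)).card : ℝ) * (K * ((1 / c) ^ q) ^ s) :=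
          nsmul_eq_mul _ _
      _ ≤ A0 := by
          rw [hA0def]
          apply mul_le_mul_of_nonneg_right _
            (mul_nonneg hK0 (Real.rpow_nonneg (Real.rpow_nonneg (by positivity) q) s))
          have := Finset.card_le_card hsub
          rw [Finset.card_range] at this
          exact_mod_cast this
  have fiberS : ∀ i : ℕ,
      ∑ m ∈ (Finset.range M).filter (fun m => φ m = i + 1), a m ≤ D * E * b i := by
    intro i
    set n : ℕ := i + 1 with hndef
    have hn1 : (1 : ℝ) ≤ (n : ℝ) := by rw [hndef]; push_cast; linarith [Nat.cast_nonneg (α := ℝ) i]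
    have hnpos : (0 : ℝ) < (n : ℝ) := by linarith
    set x : ℝ := ((n : ℝ) / c) ^ q with hxdef
    set y : ℝ := (((n : ℝ) + 1) / c) ^ q with hydef
    have hx0 : 0 ≤ x := Real.rpow_nonneg (by positivity) _
    have hy0 : 0 ≤ y := Real.rpow_nonneg (by positivity) _
    have hxy : x ≤ y := Real.rpow_le_rpow (by positivity)
      ((div_le_div_iff_of_pos_right hc).2 (by linarith)) hq0.le
    -- facts for members
    have hfacts : ∀ m : ℕ, φ m = n →
        ((n : ℝ) ≤ c * ((m : ℝ) + 1) ^ β ∧ c * ((m : ℝ) + 1) ^ β < (n : ℝ) + 1) := by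
      intro m hm
      rw [hφdef] at hm
      simp only at hm
      have hnn : (0 : ℝ) ≤ c * ((m : ℝ) + 1) ^ β := by positivity
      constructor
      · have h := Nat.floor_le hnn
        rw [hm] at h
        exact h
      · have h := Nat.lt_floor_add_one (c * ((m : ℝ) + 1) ^ β)
        rw [hm] at h
        exact h
    have hbounds : ∀ m : ℕ, φ m = n → (x ≤ (m : ℝ) + 1 ∧ (m : ℝ) + 1 < y) := by
      intro m hm
      obtain ⟨h1, h2⟩ := hfacts m hm
      constructor
      · have hd : (n : ℝ) / c ≤ ((m : ℝ) + 1) ^ β := by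
          rw [div_le_iff₀ hc, mul_comm]; exact h1
        have := Real.rpow_le_rpow (by positivity) hd hq0.le
        rwa [hid m] at this
      · have hd : ((m : ℝ) + 1) ^ β < ((n : ℝ) + 1) / c := by
          rw [lt_div_iff₀ hc, mul_comm]; exact h2
        have := Real.rpow_lt_rpow (by positivity) hd hq0
        rwa [hid m] at this
    -- cardinality bound
    have hsub : (Finset.range M).filter (fun m => φ m = n) ⊆
        Finset.Ico (⌈x⌉₊ - 1) ⌈y⌉₊ := by
      intro m hm
      rw [Finset.mem_filter] at hm
      obtain ⟨h1, h2⟩ := hbounds m hm.2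
      rw [Finset.mem_Ico]
      constructor
      · have : ⌈x⌉₊ ≤ m + 1 := Nat.ceil_le.2 (by push_cast; exact h1)
        omega
      · exact Nat.lt_ceil.2 (by linarith)
    have hone : (1 : ℝ) ≤ (n : ℝ) ^ (q - 1) := Real.one_le_rpow hn1 (by linarith)
    have hcard : ((((Finset.range M).filter (fun m => φ m = n)).card : ℝ)) ≤
        D * (n : ℝ) ^ (q - 1) := by
      have h1 : (((Finset.range M).filter (fun m => φ m = n)).card) ≤ ⌈y⌉₊ - (⌈x⌉₊ - 1) := by
        rw [← Nat.card_Ico]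
        exact Finset.card_le_card hsub
      have h2 : ((⌈y⌉₊ - (⌈x⌉₊ - 1) : ℕ) : ℝ) ≤ y - x + 2 := by
        by_cases hcase : (⌈x⌉₊ - 1 : ℕ) ≤ ⌈y⌉₊
        · rw [Nat.cast_sub hcase]
          have hyc : (⌈y⌉₊ : ℝ) < y + 1 := Nat.ceil_lt_add_one hy0
          have hxlow : x - 1 ≤ ((⌈x⌉₊ - 1 : ℕ) : ℝ) := by
            rcases Nat.eq_zero_or_pos ⌈x⌉₊ with h0 | h0
            · have : x ≤ 0 := by
                by_contra hcon
                push_neg at hcon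
                exact absurd h0 (Nat.ceil_pos.2 hcon).ne'
              simp [h0]
              linarith
            · rw [Nat.cast_sub h0]
              have := Nat.le_ceil x
              push_cast
              linarith
          linarith
        · push_neg at hcase
          rw [Nat.sub_eq_zero_of_le hcase.le]
          simp
          linarith
      have hyx : y - x + 2 ≤ D * (n : ℝ) ^ (q - 1) := by
        have hxeq : x = (n : ℝ) ^ q / c ^ q := by
          rw [hxdef, Real.div_rpow hnpos.le hc.le]
        have hyeq : y = ((n : ℝ) + 1) ^ q / c ^ q := by
          rw [hydef, Real.div_rpow (by positivity) hc.le]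
        have hinc : ((n : ℝ) + 1) ^ q ≤ (n : ℝ) ^ q + (2 ^ q - 1) * (n : ℝ) ^ (q - 1) :=
          rpow_succ_sub_le hq1 n (by omega)
        have hcq : (0 : ℝ) < c ^ q := Real.rpow_pos_of_pos hc q
        have hstep : y - x ≤ ((2 ^ q - 1) * (n : ℝ) ^ (q - 1)) / c ^ q := by
          rw [hxeq, hyeq, div_sub_div_same]
          exact (div_le_div_iff_of_pos_right hcq).2 (by linarith [hinc])
        rw [hDdef]
        have : ((2 ^ q - 1) * (n : ℝ) ^ (q - 1)) / c ^ q
            = ((2 ^ q - 1) / c ^ q) * (n : ℝ) ^ (q - 1) := by ring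
        rw [this] at hstep
        have h2q : (1 : ℝ) ≤ 2 ^ q := Real.one_le_rpow (by norm_num) hq0.le
        have ht2 : (2 : ℝ) ≤ 2 * (n : ℝ) ^ (q - 1) := by linarith
        calc y - x + 2 ≤ (2 ^ q - 1) / c ^ q * (n : ℝ) ^ (q - 1) + 2 * (n : ℝ) ^ (q - 1) := by
              linarith
          _ = ((2 ^ q - 1) / c ^ q + 2) * (n : ℝ) ^ (q - 1) := by ring
      calc (((Finset.range M).filter (fun m => φ m = n)).card : ℝ)
          ≤ ((⌈y⌉₊ - (⌈x⌉₊ - 1) : ℕ) : ℝ) := by exact_mod_cast h1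
        _ ≤ y - x + 2 := h2
        _ ≤ D * (n : ℝ) ^ (q - 1) := hyx
    -- term bound
    have hterm : ∀ m ∈ (Finset.range M).filter (fun m => φ m = n),
        a m ≤ g (n : ℝ) * y ^ s := by
      intro m hm
      rw [Finset.mem_filter] at hm
      obtain ⟨hf1, _⟩ := hfacts m hm.2
      obtain ⟨_, hb2⟩ := hbounds m hm.2
      exact mul_le_mul (hmono (n : ℝ) _ hnpos.le hf1)
        (Real.rpow_le_rpow (by positivity) hb2.le hs)
        (Real.rpow_nonneg (by positivity) s) (hg0 _ hnpos.le)
    have hys : y ^ s ≤ E * (n : ℝ) ^ (q * s) := by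
      have h1 : y ^ s = (((n : ℝ) + 1) / c) ^ (q * s) := by
        rw [hydef, ← Real.rpow_mul (by positivity)]
      have h2 : (((n : ℝ) + 1) / c) ^ (q * s) = ((n : ℝ) + 1) ^ (q * s) / c ^ (q * s) :=
        Real.div_rpow (by positivity) hc.le _
      have h3 : ((n : ℝ) + 1) ^ (q * s) ≤ (2 * (n : ℝ)) ^ (q * s) :=
        Real.rpow_le_rpow (by positivity) (by linarith) (by positivity)
      have h4 : ((2 : ℝ) * (n : ℝ)) ^ (q * s) = 2 ^ (q * s) * (n : ℝ) ^ (q * s) :=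
        Real.mul_rpow (by norm_num) hnpos.le
      have hcqs : (0 : ℝ) < c ^ (q * s) := Real.rpow_pos_of_pos hc _
      rw [h1, h2, hEdef]
      rw [h4] at h3
      calc ((n : ℝ) + 1) ^ (q * s) / c ^ (q * s)
          ≤ (2 ^ (q * s) * (n : ℝ) ^ (q * s)) / c ^ (q * s) :=
            (div_le_div_iff_of_pos_right hcqs).2 h3
        _ = 2 ^ (q * s) / c ^ (q * s) * (n : ℝ) ^ (q * s) := by ring
    calc ∑ m ∈ (Finset.range M).filter (fun m => φ m = n), a m
        ≤ (((Finset.range M).filter (fun m => φ m = n)).card) • (g (n : ℝ) * y ^ s) :=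
          Finset.sum_le_card_nsmul _ _ _ hterm
      _ = ((((Finset.range M).filter (fun m => φ m = n)).card : ℝ)) * (g (n : ℝ) * y ^ s) :=
          nsmul_eq_mul _ _
      _ ≤ (D * (n : ℝ) ^ (q - 1)) * (g (n : ℝ) * (E * (n : ℝ) ^ (q * s))) := by
          apply mul_le_mul hcard
            (mul_le_mul_of_nonneg_left hys (hg0 _ hnpos.le))
            (mul_nonneg (hg0 _ hnpos.le) (Real.rpow_nonneg hy0 s))
            (mul_nonneg hD0 (Real.rpow_nonneg hnpos.le _))
      _ = D * E * b i := by
          rw [hbdef]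
          simp only
          have hci : ((i : ℝ) + 1) = (n : ℝ) := by rw [hndef]; push_cast; ring
          rw [hci]
          have hmerge : (n : ℝ) ^ (q - 1) * (n : ℝ) ^ (q * s) = (n : ℝ) ^ p := by
            rw [← Real.rpow_add hnpos]
            congr 1
            rw [hpq]; ring
          rw [← hmerge]
          ring
  calc ∑ j ∈ Finset.range (N + 1), ∑ m ∈ (Finset.range M).filter (fun m => φ m = j), a m
      = (∑ i ∈ Finset.range N, ∑ m ∈ (Finset.range M).filter (fun m => φ m = i + 1), a m)
        + ∑ m ∈ (Finset.range M).filter (fun m => φ m = 0), a m :=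
        Finset.sum_range_succ' _ N
    _ ≤ (∑ i ∈ Finset.range N, D * E * b i) + A0 :=
        add_le_add (Finset.sum_le_sum (fun i _ => fiberS i)) fiber0
    _ = D * E * (∑ i ∈ Finset.range N, b i) + A0 := by rw [Finset.mul_sum]
    _ ≤ D * E * B + A0 :=
        add_le_add_left (mul_le_mul_of_nonneg_left
          (Summable.sum_le_tsum _ (fun i _ => hbnn i) hsum) (mul_nonneg hD0 hE0)) A0
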